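/- Let A₁ and A₂ be finite index sets with A₁ ∩ A₂ = C, and let A = A₁ Δ A₂ be their symmetric difference. Let h⁽¹⁾ : (ℤ^d)^{A₁} → ℂ and h⁽²⁾ : (ℤ^d)^{A₂} → ℂ be finitely supported tensors, and define the semi-product H : (ℤ^d)^A → ℂ by H_{k_A} = ∑_{k_C} h⁽¹⁾_{k_{A₁}} h⁽²⁾_{k_{A₂}}. Then, for any partition (X, Y) of A, writing X₁ = X ∩ A₁, Y₁ = Y ∩ A₁, X₂ = X ∩ A₂, Y₂ = Y ∩ A₂, one has ‖H‖_{k_X → k_Y} ≤ ‖h⁽¹⁾‖_{k_{X₁ ∪ C} → k_{Y₁}} · ‖h⁽²⁾‖_{k_{X₂} → k_{C ∪ Y₂}}. -/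

import Mathlib

open scoped BigOperators

noncomputable section

/-- Points of `(ℤ^d)`. -/
abbrev Vec (d : ℕ) := Fin d → ℤ

/-- Assignments `k_C = (k_j)_{j ∈ C}` of points of `ℤ^d` to the indices in a finite set `C`,
modelled as functions `ι → ℤ^d` vanishing outside `C`. -/
def Assign {ι : Type*} (d : ℕ) (C : Finset ι) : Type _ :=
  {k : ι → Vec d // ∀ i ∉ C, k i = 0}

/-- A tensor `h = h_{k_A}` depends only on the variables `k_j` with `j ∈ A`. -/
def TensorDependsOn {ι : Type*} {d : ℕ} (h : (ι → Vec d) → ℂ) (A : Finset ι) : Prop :=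
  ∀ k k' : ι → Vec d, (∀ i ∈ A, k i = k' i) → h k = h k'

/-- A tensor is finitely supported (as a function of the variables `k_A`). -/
def TensorFinSupp {ι : Type*} {d : ℕ} (h : (ι → Vec d) → ℂ) (A : Finset ι) : Prop :=
  (Function.support fun k : Assign d A => h k.1).Finite

/-- Restriction of an assignment to the coordinates in `A` (other coordinates set to `0`). -/
def proj {ι : Type*} [DecidableEq ι] {d : ℕ} (A : Finset ι) (k : ι → Vec d) : ι → Vec d :=
  fun i => if i ∈ A then k i else 0

/-- `K` is an admissible bound for the operator norm `‖h‖_{k_B → k_C}`: `K ≥ 0` and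
`∑_{k_C} |∑_{k_B} h_{k_A} z_{k_B}|² ≤ K² ∑_{k_B} |z_{k_B}|²` for every finitely supported `z`. -/
def IsOpBound {ι : Type*} {d : ℕ} (h : (ι → Vec d) → ℂ) (B C : Finset ι) (K : ℝ) : Prop :=
  0 ≤ K ∧ ∀ z : Assign d B → ℂ, (Function.support z).Finite →
    (∑' c : Assign d C, ‖∑' b : Assign d B, h (b.1 + c.1) * z b‖ ^ 2) ≤
      K ^ 2 * ∑' b : Assign d B, ‖z b‖ ^ 2

/-- The operator norm `‖h‖_{k_B → k_C}`: the smallest admissible bound. -/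
def tensorNorm {ι : Type*} {d : ℕ} (h : (ι → Vec d) → ℂ) (B C : Finset ι) : ℝ :=
  sInf {K : ℝ | IsOpBound h B C K}

namespace SemiAux

variable {ι : Type*} [DecidableEq ι] {d : ℕ}

lemma Assign.ext {A : Finset ι} {a b : Assign d A} (h : a.1 = b.1) : a = b :=
  Subtype.ext h

lemma proj_mem {A : Finset ι} {i : ι} (hi : i ∈ A) (k : ι → Vec d) : proj A k i = k i := if_pos hi

lemma proj_not_mem {A : Finset ι} {i : ι} (hi : i ∉ A) (k : ι → Vec d) : proj A k i = 0 := if_neg hi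

lemma proj_eq_self {A : Finset ι} {k : ι → Vec d} (h : ∀ i ∉ A, k i = 0) : proj A k = k := by
  funext i; by_cases hi : i ∈ A
  · exact proj_mem hi k
  · rw [proj_not_mem hi, h i hi]

lemma proj_spec (A : Finset ι) (k : ι → Vec d) : ∀ i ∉ A, proj A k i = 0 :=
  fun _ hi => proj_not_mem hi k

/-- Make an assignment from a raw function by truncating. -/
def mk (A : Finset ι) (k : ι → Vec d) : Assign d A := ⟨proj A k, proj_spec A k⟩

lemma proj_add (A : Finset ι) (k l : ι → Vec d) : proj A (k + l) = proj A k + proj A l := by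
  funext i; by_cases hi : i ∈ A <;> simp [proj, hi]

lemma proj_proj {A B : Finset ι} (k : ι → Vec d) (i : ι) :
    proj A (proj B k) i = if i ∈ A ∩ B then k i else 0 := by
  by_cases hA : i ∈ A <;> by_cases hB : i ∈ B <;> simp [proj, hA, hB]

/-- Split `Assign d D` into two pieces along a partition `B ∪ C = D`. -/
def splitEquiv {B C D : Finset ι} (hd : Disjoint B C) (hu : B ∪ C = D) :
    Assign d D ≃ Assign d B × Assign d C where
  toFun k := (mk B k.1, mk C k.1)
  invFun p := ⟨p.1.1 + p.2.1, by
    intro i hi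
    rw [← hu, Finset.mem_union] at hi
    push_neg at hi
    show p.1.1 i + p.2.1 i = 0
    rw [p.1.2 i hi.1, p.2.2 i hi.2, add_zero]⟩
  left_inv k := by
    apply Assign.ext; funext i
    show proj B k.1 i + proj C k.1 i = k.1 i
    by_cases hB : i ∈ B
    · have hC : i ∉ C := fun hC => (Finset.disjoint_left.1 hd hB) hC
      rw [proj_mem hB, proj_not_mem hC, add_zero]
    · by_cases hC : i ∈ C
      · rw [proj_mem hC, proj_not_mem hB, zero_add]
      · rw [proj_not_mem hB, proj_not_mem hC, add_zero]
        refine (k.2 i ?_).symm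
        rw [← hu, Finset.mem_union]; tauto
  right_inv p := by
    have h1 : mk B (p.1.1 + p.2.1) = p.1 := by
      apply Assign.ext; funext i
      show proj B (p.1.1 + p.2.1) i = p.1.1 i
      by_cases hB : i ∈ B
      · have hC : i ∉ C := fun hC => (Finset.disjoint_left.1 hd hB) hC
        rw [proj_mem hB]; show p.1.1 i + p.2.1 i = p.1.1 i
        rw [p.2.2 i hC, add_zero]
      · rw [proj_not_mem hB, p.1.2 i hB]
    have h2 : mk C (p.1.1 + p.2.1) = p.2 := by
      apply Assign.ext; funext i
      show proj C (p.1.1 + p.2.1) i = p.2.1 i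
      by_cases hC : i ∈ C
      · have hB : i ∉ B := fun hB => (Finset.disjoint_left.1 hd hB) hC
        rw [proj_mem hC]; show p.1.1 i + p.2.1 i = p.2.1 i
        rw [p.1.2 i hB, zero_add]
      · rw [proj_not_mem hC, p.2.2 i hC]
    exact Prod.ext h1 h2

lemma splitEquiv_apply_fst {B C D : Finset ι} (hd : Disjoint B C) (hu : B ∪ C = D)
    (k : Assign d D) : ((splitEquiv hd hu k).1 : Assign d B).1 = proj B k.1 := rfl

lemma splitEquiv_apply_snd {B C D : Finset ι} (hd : Disjoint B C) (hu : B ∪ C = D)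
    (k : Assign d D) : ((splitEquiv hd hu k).2 : Assign d C).1 = proj C k.1 := rfl

lemma splitEquiv_symm_apply {B C D : Finset ι} (hd : Disjoint B C) (hu : B ∪ C = D)
    (p : Assign d B × Assign d C) : ((splitEquiv hd hu).symm p).1 = p.1.1 + p.2.1 := rfl

end SemiAux

namespace SemiAux

variable {ι : Type*} [DecidableEq ι] {d : ℕ}

lemma finite_support_of_into {α β γ : Type*} [Zero γ] (F : α → γ) (e : α → β)
    (he : Function.Injective e) {T : Set β} (hT : T.Finite)
    (hsub : ∀ a, F a ≠ 0 → e a ∈ T) : (Function.support F).Finite :=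
  (hT.preimage he.injOn).subset hsub

lemma mem_T {A B C : Finset ι} (h : (ι → Vec d) → ℂ) (hfin : TensorFinSupp h A)
    (hu : B ∪ C = A) (b : Assign d B) (c : Assign d C) (hne : h (b.1 + c.1) ≠ 0) :
    b.1 + c.1 ∈ Subtype.val '' (Function.support fun k : Assign d A => h k.1) := by
  have hsupp : ∀ i ∉ A, (b.1 + c.1) i = 0 := by
    intro i hi
    rw [← hu, Finset.mem_union] at hi; push_neg at hi
    show b.1 i + c.1 i = 0
    rw [b.2 i hi.1, c.2 i hi.2, add_zero]
  exact ⟨⟨b.1 + c.1, hsupp⟩, hne, rfl⟩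

lemma add_inj_left {B C : Finset ι} (hd : Disjoint B C) (c : Assign d C) :
    Function.Injective (fun b : Assign d B => b.1 + c.1) := by
  intro b b' hbb
  apply Assign.ext; funext i
  by_cases hB : i ∈ B
  · have hC : i ∉ C := fun hC => (Finset.disjoint_left.1 hd hB) hC
    have := congrFun hbb i
    simpa [c.2 i hC] using this
  · rw [b.2 i hB, b'.2 i hB]

lemma add_inj_right {B C : Finset ι} (hd : Disjoint B C) (b : Assign d B) :
    Function.Injective (fun c : Assign d C => b.1 + c.1) := by
  intro c c' hcc
  apply Assign.ext; funext i
  by_cases hC : i ∈ C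
  · have hB : i ∉ B := fun hB => (Finset.disjoint_left.1 hd hB) hC
    have := congrFun hcc i
    simpa [b.2 i hB] using this
  · rw [c.2 i hC, c'.2 i hC]

lemma add_inj2 {B C : Finset ι} (hd : Disjoint B C) :
    Function.Injective (fun p : Assign d C × Assign d B => p.2.1 + p.1.1) := by
  intro p q hpq
  have h2 : p.2 = q.2 := by
    apply Assign.ext; funext i
    by_cases hB : i ∈ B
    · have hC : i ∉ C := fun hC => (Finset.disjoint_left.1 hd hB) hC
      have := congrFun hpq i
      simpa [p.1.2 i hC, q.1.2 i hC] using this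
    · rw [p.2.2 i hB, q.2.2 i hB]
  have h1 : p.1 = q.1 := by
    apply Assign.ext; funext i
    by_cases hC : i ∈ C
    · have hB : i ∉ B := fun hB => (Finset.disjoint_left.1 hd hB) hC
      have := congrFun hpq i
      simpa [p.2.2 i hB, q.2.2 i hB] using this
    · rw [p.1.2 i hC, q.1.2 i hC]
  exact Prod.ext h1 h2

lemma proj_add_eq_right {B C : Finset ι} (hd : Disjoint B C) (b : Assign d B) (c : Assign d C) :
    proj C (b.1 + c.1) = c.1 := by
  funext i
  by_cases hC : i ∈ C
  · have hB : i ∉ B := fun hB => (Finset.disjoint_left.1 hd hB) hC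
    rw [proj_mem hC]; show b.1 i + c.1 i = c.1 i; rw [b.2 i hB, zero_add]
  · rw [proj_not_mem hC, c.2 i hC]

lemma proj_add_eq_left {B C : Finset ι} (hd : Disjoint B C) (b : Assign d B) (c : Assign d C) :
    proj B (b.1 + c.1) = b.1 := by
  funext i
  by_cases hB : i ∈ B
  · have hC : i ∉ C := fun hC => (Finset.disjoint_left.1 hd hB) hC
    rw [proj_mem hB]; show b.1 i + c.1 i = b.1 i; rw [c.2 i hC, add_zero]
  · rw [proj_not_mem hB, b.2 i hB]

/-- The Hilbert–Schmidt bound: a finitely supported tensor has some operator bound. -/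
lemma exists_opBound {A B C : Finset ι} (h : (ι → Vec d) → ℂ)
    (hfin : TensorFinSupp h A) (hd : Disjoint B C) (hu : B ∪ C = A) :
    ∃ K, IsOpBound h B C K := by
  classical
  set T : Set (ι → Vec d) := Subtype.val '' (Function.support fun k : Assign d A => h k.1)
    with hT_def
  have hT : T.Finite := hfin.image _
  set M : ℝ := ∑' a : Assign d A, ‖h a.1‖ ^ 2 with hM_def
  have hM_nonneg : 0 ≤ M := tsum_nonneg fun a => sq_nonneg _
  refine ⟨Real.sqrt M, Real.sqrt_nonneg M, ?_⟩
  intro z hz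
  set Z : ℝ := ∑' b : Assign d B, ‖z b‖ ^ 2 with hZ_def
  have hZsummable : Summable fun b : Assign d B => ‖z b‖ ^ 2 := by
    apply summable_of_finite_support
    apply hz.subset
    intro b hb
    simp only [Function.mem_support] at hb ⊢
    intro h0; apply hb; rw [h0]; simp
  have hZ_nonneg : 0 ≤ Z := tsum_nonneg fun b => sq_nonneg _
  set s : Finset (Assign d B) := hz.toFinset with hs_def
  -- joint summability of ‖h (b+c)‖²
  have hFsummable : Summable fun p : Assign d C × Assign d B => ‖h (p.2.1 + p.1.1)‖ ^ 2 := by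
    apply summable_of_finite_support
    apply finite_support_of_into _ (fun p : Assign d C × Assign d B => p.2.1 + p.1.1)
      (add_inj2 hd) hT
    intro p hp
    apply mem_T h hfin hu
    intro h0; apply hp; rw [h0]; simp
  have hslice : ∀ c : Assign d C, Summable fun b : Assign d B => ‖h (b.1 + c.1)‖ ^ 2 :=
    fun c => hFsummable.prod_factor c
  -- pointwise Cauchy-Schwarz
  have hpt : ∀ c : Assign d C,
      ‖∑' b : Assign d B, h (b.1 + c.1) * z b‖ ^ 2 ≤
        (∑' b : Assign d B, ‖h (b.1 + c.1)‖ ^ 2) * Z := by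
    intro c
    have hsum_eq : (∑' b : Assign d B, h (b.1 + c.1) * z b) =
        ∑ b ∈ s, h (b.1 + c.1) * z b := by
      apply tsum_eq_sum' (s := s)
      intro b hb
      simp only [Function.mem_support] at hb
      simp only [Finset.mem_coe, hs_def, Set.Finite.mem_toFinset, Function.mem_support]
      exact fun h0 => hb (by rw [h0, mul_zero])
    rw [hsum_eq]
    calc ‖∑ b ∈ s, h (b.1 + c.1) * z b‖ ^ 2
        ≤ (∑ b ∈ s, ‖h (b.1 + c.1)‖ * ‖z b‖) ^ 2 := by
          apply pow_le_pow_left₀ (norm_nonneg _)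
          refine (norm_sum_le s _).trans ?_
          apply le_of_eq; congr 1; funext b; exact norm_mul _ _
      _ ≤ (∑ b ∈ s, ‖h (b.1 + c.1)‖ ^ 2) * ∑ b ∈ s, ‖z b‖ ^ 2 :=
          Finset.sum_mul_sq_le_sq_mul_sq s _ _
      _ ≤ (∑' b : Assign d B, ‖h (b.1 + c.1)‖ ^ 2) * Z := by
          apply mul_le_mul
          · exact (hslice c).sum_le_tsum s (fun b _ => sq_nonneg _)
          · exact hZsummable.sum_le_tsum s (fun b _ => sq_nonneg _)
          · exact Finset.sum_nonneg fun b _ => sq_nonneg _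
          · exact tsum_nonneg fun b => sq_nonneg _
  -- LHS summability
  have hLsummable : Summable fun c : Assign d C =>
      ‖∑' b : Assign d B, h (b.1 + c.1) * z b‖ ^ 2 := by
    apply summable_of_finite_support
    apply finite_support_of_into _ (fun c : Assign d C => c.1) Subtype.val_injective
      (hT.image (proj C))
    intro c hc
    have : ∃ b : Assign d B, h (b.1 + c.1) * z b ≠ 0 := by
      by_contra hall
      push_neg at hall
      apply hc
      simp only [funext hall]
      simp
    rcases this with ⟨b, hb⟩
    have hbc : b.1 + c.1 ∈ T := mem_T h hfin hu b c (fun h0 => hb (by rw [h0]; simp))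
    exact ⟨b.1 + c.1, hbc, proj_add_eq_right hd b c⟩
  -- RHS summability
  have hRsummable : Summable fun c : Assign d C =>
      (∑' b : Assign d B, ‖h (b.1 + c.1)‖ ^ 2) * Z := by
    apply summable_of_finite_support
    apply finite_support_of_into _ (fun c : Assign d C => c.1) Subtype.val_injective
      (hT.image (proj C))
    intro c hc
    have : ∃ b : Assign d B, h (b.1 + c.1) ≠ 0 := by
      by_contra hall
      push_neg at hall
      apply hc
      have : (fun b : Assign d B => ‖h (b.1 + c.1)‖ ^ 2) = fun _ => 0 := by
        funext b; rw [hall b]; simp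
      rw [this, tsum_zero, zero_mul]
    rcases this with ⟨b, hb⟩
    exact ⟨b.1 + c.1, mem_T h hfin hu b c hb, proj_add_eq_right hd b c⟩
  calc (∑' c : Assign d C, ‖∑' b : Assign d B, h (b.1 + c.1) * z b‖ ^ 2)
      ≤ ∑' c : Assign d C, (∑' b : Assign d B, ‖h (b.1 + c.1)‖ ^ 2) * Z :=
        hLsummable.tsum_le_tsum hpt hRsummable
    _ = (∑' c : Assign d C, ∑' b : Assign d B, ‖h (b.1 + c.1)‖ ^ 2) * Z := tsum_mul_right
    _ = M * Z := by
        congr 1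
        rw [← hFsummable.tsum_prod' hslice]
        exact ((((splitEquiv hd hu).trans (Equiv.prodComm _ _)).symm).tsum_eq
          (fun a : Assign d A => ‖h a.1‖ ^ 2)).symm ▸ rfl
    _ = Real.sqrt M ^ 2 * Z := by rw [Real.sq_sqrt hM_nonneg]

end SemiAux

namespace SemiAux

variable {ι : Type*} [DecidableEq ι] {d : ℕ}

lemma exists_ne_zero_of_tsum_ne_zero {α : Type*} {f : α → ℝ} (h : (∑' a, f a) ≠ 0) :
    ∃ a, f a ≠ 0 := by
  by_contra hc
  push_neg at hc
  exact h (by rw [funext hc]; exact tsum_zero)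

lemma exists_ne_zero_of_tsum_ne_zero' {α : Type*} {f : α → ℂ} (h : (∑' a, f a) ≠ 0) :
    ∃ a, f a ≠ 0 := by
  by_contra hc
  push_neg at hc
  exact h (by rw [funext hc]; exact tsum_zero)

lemma support_comp_equiv {α β γ : Type*} [Zero γ] (e : α ≃ β) {F : α → γ}
    (hF : (Function.support F).Finite) :
    (Function.support fun b => F (e.symm b)).Finite := by
  apply (hF.image e).subset
  intro b hb
  exact ⟨e.symm b, hb, by simp⟩

lemma finite_val_preimage {A : Finset ι} {T : Set (ι → Vec d)} (hT : T.Finite) :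
    {a : Assign d A | a.1 ∈ T}.Finite :=
  hT.preimage Subtype.val_injective.injOn

lemma proj_zero_of_disjoint {A B : Finset ι} (hd : Disjoint A B) {k : ι → Vec d}
    (hk : ∀ i ∉ B, k i = 0) : proj A k = 0 := by
  funext i
  by_cases hA : i ∈ A
  · rw [proj_mem hA]
    exact hk i fun hB => (Finset.disjoint_left.1 hd hA) hB
  · exact proj_not_mem hA k

lemma proj_split {B C : Finset ι} (hd : Disjoint B C) {k : ι → Vec d}
    (hk : ∀ i ∉ B ∪ C, k i = 0) : proj B k + proj C k = k := by
  funext i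
  show proj B k i + proj C k i = k i
  by_cases hB : i ∈ B
  · have hC : i ∉ C := fun hC => (Finset.disjoint_left.1 hd hB) hC
    rw [proj_mem hB, proj_not_mem hC, add_zero]
  · by_cases hC : i ∈ C
    · rw [proj_mem hC, proj_not_mem hB, zero_add]
    · rw [proj_not_mem hB, proj_not_mem hC, add_zero]
      exact (hk i (by simp [hB, hC])).symm

lemma proj_proj_of_subset {B A : Finset ι} (hBA : B ⊆ A) (k : ι → Vec d) :
    proj B (proj A k) = proj B k := by
  funext i
  by_cases hB : i ∈ B
  · rw [proj_mem hB, proj_mem hB, proj_mem (hBA hB)]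
  · rw [proj_not_mem hB, proj_not_mem hB]

/-- if `h k ≠ 0` and `h` depends on `A` then `proj A k` is (the value of) a support point. -/
lemma proj_mem_support {A : Finset ι} {h : (ι → Vec d) → ℂ} (hdep : TensorDependsOn h A)
    {k : ι → Vec d} (hk : h k ≠ 0) :
    proj A k ∈ Subtype.val '' (Function.support fun a : Assign d A => h a.1) := by
  refine ⟨mk A k, ?_, rfl⟩
  show h (proj A k) ≠ 0
  rwa [hdep (proj A k) k fun i hi => proj_mem hi k]

end SemiAux

namespace SemiAux

variable {ι : Type*} [DecidableEq ι] {d : ℕ}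

lemma key
    (A₁ A₂ : Finset ι) (h₁ h₂ : (ι → Vec d) → ℂ)
    (h₁dep : TensorDependsOn h₁ A₁) (h₂dep : TensorDependsOn h₂ A₂)
    (h₁fin : TensorFinSupp h₁ A₁) (h₂fin : TensorFinSupp h₂ A₂)
    (H : (ι → Vec d) → ℂ)
    (hH : ∀ k : ι → Vec d,
      H k = ∑' c : Assign d (A₁ ∩ A₂),
        h₁ (proj ((A₁ ∪ A₂) \ (A₁ ∩ A₂)) k + c.1) * h₂ (proj ((A₁ ∪ A₂) \ (A₁ ∩ A₂)) k + c.1))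
    (X Y : Finset ι) (hdisj : Disjoint X Y) (hpart : X ∪ Y = (A₁ ∪ A₂) \ (A₁ ∩ A₂))
    {K₁ K₂ : ℝ}
    (hK₁ : IsOpBound h₁ ((X ∩ A₁) ∪ (A₁ ∩ A₂)) (Y ∩ A₁) K₁)
    (hK₂ : IsOpBound h₂ (X ∩ A₂) ((A₁ ∩ A₂) ∪ (Y ∩ A₂)) K₂) :
    IsOpBound H X Y (K₁ * K₂) := by
  classical
  obtain ⟨hK₁0, hK₁b⟩ := hK₁
  obtain ⟨hK₂0, hK₂b⟩ := hK₂
  set C := A₁ ∩ A₂ with hCdef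
  set X₁ := X ∩ A₁ with hX₁def
  set X₂ := X ∩ A₂ with hX₂def
  set Y₁ := Y ∩ A₁ with hY₁def
  set Y₂ := Y ∩ A₂ with hY₂def
  -- pointwise membership facts
  have hmemiff : ∀ i, (i ∈ X ∨ i ∈ Y) ↔ ((i ∈ A₁ ∨ i ∈ A₂) ∧ ¬(i ∈ A₁ ∧ i ∈ A₂)) := by
    intro i
    have := Finset.ext_iff.1 hpart i
    simpa only [Finset.mem_union, Finset.mem_sdiff, Finset.mem_inter, hCdef] using this
  have hXY : ∀ i, i ∈ X → i ∈ Y → False := fun i hi hj => Finset.disjoint_left.1 hdisj hi hj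
  have hXnC : ∀ i ∈ X, ¬(i ∈ A₁ ∧ i ∈ A₂) := fun i hi => ((hmemiff i).1 (Or.inl hi)).2
  have hYnC : ∀ i ∈ Y, ¬(i ∈ A₁ ∧ i ∈ A₂) := fun i hi => ((hmemiff i).1 (Or.inr hi)).2
  -- finset combinatorics
  have dX₁X₂ : Disjoint X₁ X₂ := by
    rw [Finset.disjoint_left]; intro i hi hj
    rw [hX₁def, Finset.mem_inter] at hi; rw [hX₂def, Finset.mem_inter] at hj
    exact hXnC i hi.1 ⟨hi.2, hj.2⟩
  have uX : X₁ ∪ X₂ = X := by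
    ext i
    simp only [hX₁def, hX₂def, Finset.mem_union, Finset.mem_inter]
    constructor
    · tauto
    · intro hi
      have := ((hmemiff i).1 (Or.inl hi)).1
      tauto
  have dY₁Y₂ : Disjoint Y₁ Y₂ := by
    rw [Finset.disjoint_left]; intro i hi hj
    rw [hY₁def, Finset.mem_inter] at hi; rw [hY₂def, Finset.mem_inter] at hj
    exact hYnC i hi.1 ⟨hi.2, hj.2⟩
  have uY : Y₁ ∪ Y₂ = Y := by
    ext i
    simp only [hY₁def, hY₂def, Finset.mem_union, Finset.mem_inter]
    constructor
    · tauto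
    · intro hi
      have := ((hmemiff i).1 (Or.inr hi)).1
      tauto
  have dX₁C : Disjoint X₁ C := by
    rw [Finset.disjoint_left]; intro i hi hj
    rw [hX₁def, Finset.mem_inter] at hi; rw [hCdef, Finset.mem_inter] at hj
    exact hXnC i hi.1 hj
  have dX₂C : Disjoint X₂ C := by
    rw [Finset.disjoint_left]; intro i hi hj
    rw [hX₂def, Finset.mem_inter] at hi; rw [hCdef, Finset.mem_inter] at hj
    exact hXnC i hi.1 hj
  have dCY₂ : Disjoint C Y₂ := by
    rw [Finset.disjoint_left]; intro i hi hj
    rw [hCdef, Finset.mem_inter] at hi; rw [hY₂def, Finset.mem_inter] at hj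
    exact hYnC i hj.1 hi
  have dCY₁ : Disjoint C Y₁ := by
    rw [Finset.disjoint_left]; intro i hi hj
    rw [hCdef, Finset.mem_inter] at hi; rw [hY₁def, Finset.mem_inter] at hj
    exact hYnC i hj.1 hi
  have dX₂Y₂ : Disjoint X₂ Y₂ := by
    rw [Finset.disjoint_left]; intro i hi hj
    rw [hX₂def, Finset.mem_inter] at hi; rw [hY₂def, Finset.mem_inter] at hj
    exact hXY i hi.1 hj.1
  have dX₁Y₁ : Disjoint X₁ Y₁ := by
    rw [Finset.disjoint_left]; intro i hi hj
    rw [hX₁def, Finset.mem_inter] at hi; rw [hY₁def, Finset.mem_inter] at hj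
    exact hXY i hi.1 hj.1
  have dUY₁ : Disjoint (X₁ ∪ C) Y₁ := by
    rw [Finset.disjoint_union_left]
    exact ⟨dX₁Y₁, dCY₁⟩
  have uU : (X₁ ∪ C) ∪ Y₁ = A₁ := by
    ext i
    simp only [hX₁def, hCdef, hY₁def, Finset.mem_union, Finset.mem_inter]
    constructor
    · tauto
    · intro hi
      by_cases h2 : i ∈ A₂
      · tauto
      · have := (hmemiff i).2 ⟨Or.inl hi, fun h => h2 h.2⟩
        tauto
  have dX₂V : Disjoint X₂ (C ∪ Y₂) := by
    rw [Finset.disjoint_union_right]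
    exact ⟨dX₂C, dX₂Y₂⟩
  have uV : X₂ ∪ (C ∪ Y₂) = A₂ := by
    ext i
    simp only [hX₂def, hCdef, hY₂def, Finset.mem_union, Finset.mem_inter]
    constructor
    · tauto
    · intro hi
      by_cases h1 : i ∈ A₁
      · tauto
      · have := (hmemiff i).2 ⟨Or.inr hi, fun h => h1 h.1⟩
        tauto
  have CsubA₁ : C ⊆ A₁ := hCdef ▸ Finset.inter_subset_left
  have CsubA₂ : C ⊆ A₂ := hCdef ▸ Finset.inter_subset_right
  have Y₁subA₁ : Y₁ ⊆ A₁ := hY₁def ▸ Finset.inter_subset_right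
  have Y₂subA₂ : Y₂ ⊆ A₂ := hY₂def ▸ Finset.inter_subset_right
  -- equivalences
  set eX := splitEquiv (d := d) dX₁X₂ uX with heXdef
  set eY := splitEquiv (d := d) dY₁Y₂ uY with heYdef
  set eU := splitEquiv (d := d) dX₁C rfl with heUdef
  set eV := splitEquiv (d := d) dCY₂ rfl with heVdef
  -- finite supports
  set T₁ : Set (ι → Vec d) := Subtype.val '' (Function.support fun a : Assign d A₁ => h₁ a.1)
    with hT₁def
  have hT₁ : T₁.Finite := h₁fin.image _
  set T₂ : Set (ι → Vec d) := Subtype.val '' (Function.support fun a : Assign d A₂ => h₂ a.1)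
    with hT₂def
  have hT₂ : T₂.Finite := h₂fin.image _
  constructor
  · exact mul_nonneg hK₁0 hK₂0
  intro z hz
  set Sx₁ : Set (Assign d X₁) := (fun x => (eX x).1) '' (Function.support z) with hSx₁def
  have hSx₁ : Sx₁.Finite := hz.image _
  set Sx₂ : Set (Assign d X₂) := (fun x => (eX x).2) '' (Function.support z) with hSx₂def
  have hSx₂ : Sx₂.Finite := hz.image _
  set Sc : Set (Assign d C) := {c | c.1 ∈ proj C '' T₁} with hScdef
  have hSc : Sc.Finite := finite_val_preimage (hT₁.image _)
  set Sc₂ : Set (Assign d C) := {c | c.1 ∈ proj C '' T₂} with hSc₂def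
  have hSc₂ : Sc₂.Finite := finite_val_preimage (hT₂.image _)
  set Sy₂ : Set (Assign d Y₂) := {a | a.1 ∈ proj Y₂ '' T₂} with hSy₂def
  have hSy₂ : Sy₂.Finite := finite_val_preimage (hT₂.image _)
  set Sy₁ : Set (Assign d Y₁) := {a | a.1 ∈ proj Y₁ '' T₁} with hSy₁def
  have hSy₁ : Sy₁.Finite := finite_val_preimage (hT₁.image _)
  -- the intermediate kernel
  set w : Assign d (X₁ ∪ C) → Assign d Y₂ → ℂ :=
    fun u y₂ => ∑' x₂ : Assign d X₂,
      h₂ (x₂.1 + (proj C u.1 + y₂.1)) * z (eX.symm (mk X₁ u.1, x₂)) with hwdef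
  -- extraction from nonvanishing of h₂
  have hext₂ : ∀ (u : Assign d (X₁ ∪ C)) (y₂ : Assign d Y₂) (x₂ : Assign d X₂),
      h₂ (x₂.1 + (proj C u.1 + y₂.1)) ≠ 0 →
      proj C u.1 ∈ proj C '' T₂ ∧ y₂.1 ∈ proj Y₂ '' T₂ := by
    intro u y₂ x₂ hne
    have hmem := proj_mem_support h₂dep hne
    constructor
    · refine ⟨proj A₂ (x₂.1 + (proj C u.1 + y₂.1)), hmem, ?_⟩
      rw [proj_proj_of_subset CsubA₂, proj_add, proj_add,
        proj_zero_of_disjoint dX₂C.symm x₂.2,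
        proj_proj_of_subset (Finset.Subset.refl C),
        proj_zero_of_disjoint dCY₂ y₂.2, add_zero, zero_add]
    · refine ⟨proj A₂ (x₂.1 + (proj C u.1 + y₂.1)), hmem, ?_⟩
      rw [proj_proj_of_subset Y₂subA₂, proj_add, proj_add,
        proj_zero_of_disjoint (dX₂Y₂.symm) x₂.2,
        proj_zero_of_disjoint dCY₂.symm (proj_spec C u.1),
        proj_eq_self y₂.2, zero_add, zero_add]
  -- finite support of (uncurried) w
  have hwsupp : (Function.support fun p : Assign d (X₁ ∪ C) × Assign d Y₂ =>
      w p.1 p.2).Finite := by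
    apply finite_support_of_into _ (fun p : Assign d (X₁ ∪ C) × Assign d Y₂ => (eU p.1, p.2))
      (Function.Injective.prodMap eU.injective (fun a b h => h))
      ((hSx₁.prod hSc₂).prod hSy₂)
    intro p hp
    obtain ⟨x₂, hx₂⟩ := exists_ne_zero_of_tsum_ne_zero' hp
    have hh₂ : h₂ (x₂.1 + (proj C p.1.1 + p.2.1)) ≠ 0 := fun h0 => hx₂ (by rw [h0, zero_mul])
    have hzz : z (eX.symm (mk X₁ p.1.1, x₂)) ≠ 0 := fun h0 => hx₂ (by rw [h0, mul_zero])
    obtain ⟨hcu, hy₂⟩ := hext₂ p.1 p.2 x₂ hh₂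
    refine ⟨⟨?_, ?_⟩, hy₂⟩
    · refine ⟨eX.symm (mk X₁ p.1.1, x₂), hzz, ?_⟩
      show (eX (eX.symm (mk X₁ p.1.1, x₂))).1 = _
      rw [Equiv.apply_symm_apply]
      rfl
    · exact hcu
  have mk_val : ∀ (A : Finset ι) (k : ι → Vec d), (mk A k).1 = proj A k := fun _ _ => rfl
  -- the equivalences used for regrouping
  set E₁ := (eX.prodCongr (Equiv.refl (Assign d C))).trans
      (Equiv.prodAssoc (Assign d X₁) (Assign d X₂) (Assign d C)) with hE₁def
  set E₂ := (eU.prodCongr (Equiv.refl (Assign d X₂))).trans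
      ((Equiv.prodAssoc (Assign d X₁) (Assign d C) (Assign d X₂)).trans
        ((Equiv.refl (Assign d X₁)).prodCongr (Equiv.prodComm (Assign d C) (Assign d X₂))))
    with hE₂def
  -- Step 1: rewrite the inner sum
  have step1 : ∀ y : Assign d Y,
      (∑' x : Assign d X, H (x.1 + y.1) * z x) =
        ∑' u : Assign d (X₁ ∪ C), h₁ (u.1 + proj Y₁ y.1) * w u (mk Y₂ y.1) := by
    intro y
    set m : Assign d X₁ × (Assign d X₂ × Assign d C) → ℂ := fun p =>
      h₁ (p.1.1 + p.2.2.1 + proj Y₁ y.1) * h₂ (p.2.1.1 + (p.2.2.1 + proj Y₂ y.1)) *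
        z (eX.symm (p.1, p.2.1)) with hmdef
    have hmsupp : (Function.support m).Finite := by
      apply ((hSx₁.prod (hSx₂.prod hSc))).subset
      intro p hp
      simp only [Function.mem_support, hmdef] at hp
      have hzz : z (eX.symm (p.1, p.2.1)) ≠ 0 := fun h0 => hp (by rw [h0, mul_zero])
      have hh₁ : h₁ (p.1.1 + p.2.2.1 + proj Y₁ y.1) ≠ 0 := fun h0 =>
        hp (by rw [h0, zero_mul, zero_mul])
      refine ⟨?_, ?_, ?_⟩
      · refine ⟨eX.symm (p.1, p.2.1), hzz, ?_⟩
        show (eX (eX.symm (p.1, p.2.1))).1 = p.1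
        rw [Equiv.apply_symm_apply]
      · refine ⟨eX.symm (p.1, p.2.1), hzz, ?_⟩
        show (eX (eX.symm (p.1, p.2.1))).2 = p.2.1
        rw [Equiv.apply_symm_apply]
      · show p.2.2.1 ∈ proj C '' T₁
        refine ⟨proj A₁ (p.1.1 + p.2.2.1 + proj Y₁ y.1), proj_mem_support h₁dep hh₁, ?_⟩
        rw [proj_proj_of_subset CsubA₁, proj_add, proj_add,
          proj_zero_of_disjoint dX₁C.symm p.1.2, proj_eq_self p.2.2.2,
          proj_zero_of_disjoint dCY₁ (proj_spec Y₁ y.1), zero_add, add_zero]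
    have hHy : ∀ x : Assign d X, H (x.1 + y.1) =
        ∑' c : Assign d C, h₁ (x.1 + y.1 + c.1) * h₂ (x.1 + y.1 + c.1) := by
      intro x
      rw [hH (x.1 + y.1)]
      have hproj : proj ((A₁ ∪ A₂) \ C) (x.1 + y.1) = x.1 + y.1 := by
        apply proj_eq_self
        intro i hi
        have hiXY : i ∉ X ∪ Y := by rw [hpart]; exact hi
        rw [Finset.mem_union] at hiXY; push_neg at hiXY
        show x.1 i + y.1 i = 0
        rw [x.2 i hiXY.1, y.2 i hiXY.2, add_zero]
      rw [hproj]
    have id1 : ∀ q : Assign d X × Assign d C,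
        h₁ (q.1.1 + y.1 + q.2.1) * h₂ (q.1.1 + y.1 + q.2.1) * z q.1 = m (E₁ q) := by
      intro q
      have hE₁app : E₁ q = ((eX q.1).1, ((eX q.1).2, q.2)) := rfl
      rw [hE₁app, hmdef]
      have e3 : eX.symm ((eX q.1).1, (eX q.1).2) = q.1 := by
        rw [Prod.mk.eta, Equiv.symm_apply_apply]
      have e1 : ((eX q.1).1 : Assign d X₁).1 = proj X₁ q.1.1 := rfl
      have e2 : ((eX q.1).2 : Assign d X₂).1 = proj X₂ q.1.1 := rfl
      simp only [e1, e2, e3]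
      congr 1
      congr 1
      · apply h₁dep
        intro i hiA₁
        simp only [Pi.add_apply]
        by_cases hiX : i ∈ X
        · have hiY : i ∉ Y := fun h => hXY i hiX h
          have hiC : i ∉ C := fun h => hXnC i hiX (Finset.mem_inter.1 (hCdef ▸ h))
          have hiX₁ : i ∈ X₁ := by rw [hX₁def]; exact Finset.mem_inter.2 ⟨hiX, hiA₁⟩
          have hiY₁ : i ∉ Y₁ := fun h => hiY (Finset.mem_inter.1 (hY₁def ▸ h)).1
          rw [y.2 i hiY, q.2.2 i hiC, proj_mem hiX₁, proj_not_mem hiY₁]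
        · by_cases hiY : i ∈ Y
          · have hiC : i ∉ C := fun h => hYnC i hiY (Finset.mem_inter.1 (hCdef ▸ h))
            have hiX₁ : i ∉ X₁ := fun h => hiX (Finset.mem_inter.1 (hX₁def ▸ h)).1
            have hiY₁ : i ∈ Y₁ := by rw [hY₁def]; exact Finset.mem_inter.2 ⟨hiY, hiA₁⟩
            rw [q.1.2 i hiX, q.2.2 i hiC, proj_not_mem hiX₁, proj_mem hiY₁]
            abel
          · have hi2 : i ∈ A₁ ∧ i ∈ A₂ := by
              by_contra hcon
              rcases (hmemiff i).2 ⟨Or.inl hiA₁, hcon⟩ with h | h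
              exacts [hiX h, hiY h]
            have hiC : i ∈ C := by rw [hCdef]; exact Finset.mem_inter.2 hi2
            have hiX₁ : i ∉ X₁ := fun h => hiX (Finset.mem_inter.1 (hX₁def ▸ h)).1
            have hiY₁ : i ∉ Y₁ := fun h => hiY (Finset.mem_inter.1 (hY₁def ▸ h)).1
            rw [q.1.2 i hiX, y.2 i hiY, proj_not_mem hiX₁, proj_not_mem hiY₁]
            abel
      · apply h₂dep
        intro i hiA₂
        simp only [Pi.add_apply]
        by_cases hiX : i ∈ X
        · have hiY : i ∉ Y := fun h => hXY i hiX h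
          have hiC : i ∉ C := fun h => hXnC i hiX (Finset.mem_inter.1 (hCdef ▸ h))
          have hiX₂ : i ∈ X₂ := by rw [hX₂def]; exact Finset.mem_inter.2 ⟨hiX, hiA₂⟩
          have hiY₂ : i ∉ Y₂ := fun h => hiY (Finset.mem_inter.1 (hY₂def ▸ h)).1
          rw [y.2 i hiY, q.2.2 i hiC, proj_mem hiX₂, proj_not_mem hiY₂]
          abel
        · by_cases hiY : i ∈ Y
          · have hiC : i ∉ C := fun h => hYnC i hiY (Finset.mem_inter.1 (hCdef ▸ h))
            have hiX₂ : i ∉ X₂ := fun h => hiX (Finset.mem_inter.1 (hX₂def ▸ h)).1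
            have hiY₂ : i ∈ Y₂ := by rw [hY₂def]; exact Finset.mem_inter.2 ⟨hiY, hiA₂⟩
            rw [q.1.2 i hiX, q.2.2 i hiC, proj_not_mem hiX₂, proj_mem hiY₂]
            abel
          · have hi2 : i ∈ A₁ ∧ i ∈ A₂ := by
              by_contra hcon
              rcases (hmemiff i).2 ⟨Or.inr hiA₂, hcon⟩ with h | h
              exacts [hiX h, hiY h]
            have hiC : i ∈ C := by rw [hCdef]; exact Finset.mem_inter.2 hi2
            have hiX₂ : i ∉ X₂ := fun h => hiX (Finset.mem_inter.1 (hX₂def ▸ h)).1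
            have hiY₂ : i ∉ Y₂ := fun h => hiY (Finset.mem_inter.1 (hY₂def ▸ h)).1
            rw [q.1.2 i hiX, y.2 i hiY, proj_not_mem hiX₂, proj_not_mem hiY₂]
            abel
    have id2 : ∀ (u : Assign d (X₁ ∪ C)) (x₂ : Assign d X₂),
        m (E₂ (u, x₂)) = h₁ (u.1 + proj Y₁ y.1) *
          (h₂ (x₂.1 + (proj C u.1 + proj Y₂ y.1)) * z (eX.symm (mk X₁ u.1, x₂))) := by
      intro u x₂
      have hE₂app : E₂ (u, x₂) = (mk X₁ u.1, (x₂, mk C u.1)) := rfl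
      rw [hE₂app, hmdef]
      simp only [mk_val]
      rw [proj_split dX₁C u.2, mul_assoc]
    have hsummE₁ : Summable fun q : Assign d X × Assign d C => m (E₁ q) :=
      summable_of_finite_support (support_comp_equiv E₁.symm hmsupp)
    have hsummE₂ : Summable fun r : Assign d (X₁ ∪ C) × Assign d X₂ => m (E₂ r) :=
      summable_of_finite_support (support_comp_equiv E₂.symm hmsupp)
    calc (∑' x : Assign d X, H (x.1 + y.1) * z x)
        = ∑' x : Assign d X, ∑' c : Assign d C, m (E₁ (x, c)) := by
          apply tsum_congr; intro x
          rw [hHy x, ← tsum_mul_right]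
          exact tsum_congr fun c => id1 (x, c)
      _ = ∑' q : Assign d X × Assign d C, m (E₁ q) :=
          (hsummE₁.tsum_prod' fun x => hsummE₁.prod_factor x).symm
      _ = ∑' p, m p := E₁.tsum_eq m
      _ = ∑' r : Assign d (X₁ ∪ C) × Assign d X₂, m (E₂ r) := (E₂.tsum_eq m).symm
      _ = ∑' u : Assign d (X₁ ∪ C), ∑' x₂ : Assign d X₂, m (E₂ (u, x₂)) :=
          hsummE₂.tsum_prod' fun u => hsummE₂.prod_factor u
      _ = ∑' u : Assign d (X₁ ∪ C), h₁ (u.1 + proj Y₁ y.1) * w u (mk Y₂ y.1) := by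
          apply tsum_congr; intro u
          rw [tsum_congr fun x₂ => id2 u x₂, tsum_mul_left]
          rfl
  -- Step 2: split the outer sum over Y
  set e3 := eY.trans (Equiv.prodComm (Assign d Y₁) (Assign d Y₂)) with he3def
  have hstep2sum : (Function.support fun q : Assign d Y₂ × Assign d Y₁ =>
      ‖∑' u : Assign d (X₁ ∪ C), h₁ (u.1 + q.2.1) * w u q.1‖ ^ 2).Finite := by
    apply ((hwsupp.image Prod.snd).prod hSy₁).subset
    intro q hq
    rw [Function.mem_support] at hq
    have htne : (∑' u : Assign d (X₁ ∪ C), h₁ (u.1 + q.2.1) * w u q.1) ≠ 0 := fun h0 =>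
      hq (by rw [h0]; simp)
    obtain ⟨u, hu⟩ := exists_ne_zero_of_tsum_ne_zero' htne
    have hh₁ : h₁ (u.1 + q.2.1) ≠ 0 := fun h0 => hu (by rw [h0, zero_mul])
    have hwne : w u q.1 ≠ 0 := fun h0 => hu (by rw [h0, mul_zero])
    constructor
    · exact ⟨(u, q.1), hwne, rfl⟩
    · show q.2.1 ∈ proj Y₁ '' T₁
      refine ⟨proj A₁ (u.1 + q.2.1), proj_mem_support h₁dep hh₁, ?_⟩
      rw [proj_proj_of_subset Y₁subA₁, proj_add, proj_zero_of_disjoint dUY₁.symm u.2,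
        proj_eq_self q.2.2, zero_add]
  have step2 : (∑' y : Assign d Y, ‖∑' x : Assign d X, H (x.1 + y.1) * z x‖ ^ 2) =
      ∑' y₂ : Assign d Y₂, ∑' y₁ : Assign d Y₁,
        ‖∑' u : Assign d (X₁ ∪ C), h₁ (u.1 + y₁.1) * w u y₂‖ ^ 2 := by
    have h1 : ∀ q : Assign d Y₂ × Assign d Y₁,
        (∑' x : Assign d X, H (x.1 + (e3.symm q).1) * z x) =
          ∑' u : Assign d (X₁ ∪ C), h₁ (u.1 + q.2.1) * w u q.1 := by
      intro q
      rw [step1 (e3.symm q)]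
      have hy : ((e3.symm q : Assign d Y)).1 = q.2.1 + q.1.1 := rfl
      have hproj1 : proj Y₁ (e3.symm q : Assign d Y).1 = q.2.1 := by
        rw [hy]; exact proj_add_eq_left dY₁Y₂ q.2 q.1
      have hproj2 : mk Y₂ (e3.symm q : Assign d Y).1 = q.1 := by
        apply Assign.ext
        show proj Y₂ (e3.symm q : Assign d Y).1 = q.1.1
        rw [hy]; exact proj_add_eq_right dY₁Y₂ q.2 q.1
      rw [hproj1, hproj2]
    calc (∑' y : Assign d Y, ‖∑' x : Assign d X, H (x.1 + y.1) * z x‖ ^ 2)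
        = ∑' q : Assign d Y₂ × Assign d Y₁,
            ‖∑' x : Assign d X, H (x.1 + (e3.symm q : Assign d Y).1) * z x‖ ^ 2 :=
          (e3.symm.tsum_eq fun y : Assign d Y =>
            ‖∑' x : Assign d X, H (x.1 + y.1) * z x‖ ^ 2).symm
      _ = ∑' q : Assign d Y₂ × Assign d Y₁,
            ‖∑' u : Assign d (X₁ ∪ C), h₁ (u.1 + q.2.1) * w u q.1‖ ^ 2 :=
          tsum_congr fun q => by rw [h1 q]
      _ = _ := (summable_of_finite_support hstep2sum).tsum_prod'
            fun y₂ => (summable_of_finite_support hstep2sum).prod_factor y₂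
  -- Step 3: apply the bound for h₁
  have hwslice : ∀ y₂ : Assign d Y₂,
      (Function.support fun u : Assign d (X₁ ∪ C) => w u y₂).Finite := by
    intro y₂
    apply finite_support_of_into _ (fun u : Assign d (X₁ ∪ C) => (u, y₂))
      (fun a b hab => (Prod.ext_iff.1 hab).1) hwsupp
    intro u hu
    exact hu
  have step3 : ∀ y₂ : Assign d Y₂,
      (∑' y₁ : Assign d Y₁, ‖∑' u : Assign d (X₁ ∪ C), h₁ (u.1 + y₁.1) * w u y₂‖ ^ 2) ≤
        K₁ ^ 2 * ∑' u : Assign d (X₁ ∪ C), ‖w u y₂‖ ^ 2 :=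
    fun y₂ => hK₁b (fun u => w u y₂) (hwslice y₂)
  -- Step 4: regroup the middle sum
  set E₃ := (Equiv.prodAssoc (Assign d X₁) (Assign d C) (Assign d Y₂)).symm.trans
      ((eU.symm.prodCongr (Equiv.refl (Assign d Y₂))).trans
        (Equiv.prodComm (Assign d (X₁ ∪ C)) (Assign d Y₂))) with hE₃def
  have hwswapsupp : (Function.support fun s : Assign d Y₂ × Assign d (X₁ ∪ C) =>
      ‖w s.2 s.1‖ ^ 2).Finite := by
    apply finite_support_of_into _
      (fun s : Assign d Y₂ × Assign d (X₁ ∪ C) => (s.2, s.1))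
      (fun a b hab => by
        rw [Prod.ext_iff] at hab ⊢
        exact ⟨hab.2, hab.1⟩) hwsupp
    intro s hs
    show w s.2 s.1 ≠ 0
    exact fun h0 => hs (by rw [h0]; simp)
  have hsumE₃ : Summable fun t : Assign d X₁ × (Assign d C × Assign d Y₂) =>
      ‖w (eU.symm (t.1, t.2.1)) t.2.2‖ ^ 2 :=
    summable_of_finite_support (support_comp_equiv E₃.symm hwswapsupp)
  have step4 : (∑' y₂ : Assign d Y₂, ∑' u : Assign d (X₁ ∪ C), ‖w u y₂‖ ^ 2) =
      ∑' x₁ : Assign d X₁, ∑' v : Assign d (C ∪ Y₂),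
        ‖∑' x₂ : Assign d X₂, h₂ (x₂.1 + v.1) * z (eX.symm (x₁, x₂))‖ ^ 2 := by
    have hwv : ∀ (x₁ : Assign d X₁) (v : Assign d (C ∪ Y₂)),
        w (eU.symm (x₁, mk C v.1)) (mk Y₂ v.1) =
          ∑' x₂ : Assign d X₂, h₂ (x₂.1 + v.1) * z (eX.symm (x₁, x₂)) := by
      intro x₁ v
      have hu1 : ((eU.symm (x₁, mk C v.1) : Assign d (X₁ ∪ C))).1 = x₁.1 + proj C v.1 := rfl
      have hpc : proj C (x₁.1 + proj C v.1) = proj C v.1 := by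
        rw [proj_add, proj_zero_of_disjoint dX₁C.symm x₁.2,
          proj_proj_of_subset (Finset.Subset.refl C), zero_add]
      have hmkx : mk X₁ (x₁.1 + proj C v.1) = x₁ := by
        apply Assign.ext
        show proj X₁ (x₁.1 + proj C v.1) = x₁.1
        rw [proj_add, proj_eq_self x₁.2, proj_zero_of_disjoint dX₁C (proj_spec C v.1), add_zero]
      have hvsplit : proj C v.1 + proj Y₂ v.1 = v.1 := proj_split dCY₂ v.2
      simp only [hwdef]
      apply tsum_congr; intro x₂
      rw [hu1, hpc, hmkx]
      show h₂ (x₂.1 + (proj C v.1 + proj Y₂ v.1)) * _ = _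
      rw [hvsplit]
    calc (∑' y₂ : Assign d Y₂, ∑' u : Assign d (X₁ ∪ C), ‖w u y₂‖ ^ 2)
        = ∑' s : Assign d Y₂ × Assign d (X₁ ∪ C), ‖w s.2 s.1‖ ^ 2 :=
          ((summable_of_finite_support hwswapsupp).tsum_prod'
            fun y₂ => (summable_of_finite_support hwswapsupp).prod_factor y₂).symm
      _ = ∑' t : Assign d X₁ × (Assign d C × Assign d Y₂),
            ‖w (eU.symm (t.1, t.2.1)) t.2.2‖ ^ 2 := by
          rw [← E₃.tsum_eq fun s : Assign d Y₂ × Assign d (X₁ ∪ C) => ‖w s.2 s.1‖ ^ 2]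
          exact tsum_congr fun t => rfl
      _ = ∑' x₁ : Assign d X₁, ∑' r : Assign d C × Assign d Y₂,
            ‖w (eU.symm (x₁, r.1)) r.2‖ ^ 2 :=
          hsumE₃.tsum_prod' fun x₁ => hsumE₃.prod_factor x₁
      _ = ∑' x₁ : Assign d X₁, ∑' v : Assign d (C ∪ Y₂),
            ‖∑' x₂ : Assign d X₂, h₂ (x₂.1 + v.1) * z (eX.symm (x₁, x₂))‖ ^ 2 := by
          apply tsum_congr; intro x₁
          rw [← eV.tsum_eq fun r : Assign d C × Assign d Y₂ =>
            ‖w (eU.symm (x₁, r.1)) r.2‖ ^ 2]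
          apply tsum_congr; intro v
          rw [show ((eV v).1 : Assign d C) = mk C v.1 from rfl,
            show ((eV v).2 : Assign d Y₂) = mk Y₂ v.1 from rfl, hwv x₁ v]
  -- Step 5: apply the bound for h₂
  have hzslice : ∀ x₁ : Assign d X₁,
      (Function.support fun x₂ : Assign d X₂ => z (eX.symm (x₁, x₂))).Finite := by
    intro x₁
    apply finite_support_of_into _ (fun x₂ : Assign d X₂ => eX.symm (x₁, x₂))
      (fun a b hab => by
        have := eX.symm.injective hab
        exact (Prod.ext_iff.1 this).2) hz
    intro x₂ hx₂
    exact hx₂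
  have step5 : ∀ x₁ : Assign d X₁,
      (∑' v : Assign d (C ∪ Y₂),
        ‖∑' x₂ : Assign d X₂, h₂ (x₂.1 + v.1) * z (eX.symm (x₁, x₂))‖ ^ 2) ≤
        K₂ ^ 2 * ∑' x₂ : Assign d X₂, ‖z (eX.symm (x₁, x₂))‖ ^ 2 :=
    fun x₁ => hK₂b _ (hzslice x₁)
  -- summabilities for step 6
  have hLfin : (Function.support fun x₁ : Assign d X₁ =>
      ∑' v : Assign d (C ∪ Y₂),
        ‖∑' x₂ : Assign d X₂, h₂ (x₂.1 + v.1) * z (eX.symm (x₁, x₂))‖ ^ 2).Finite := by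
    apply hSx₁.subset
    intro x₁ hx₁
    rw [Function.mem_support] at hx₁
    obtain ⟨v, hv⟩ := exists_ne_zero_of_tsum_ne_zero hx₁
    have h0 : (∑' x₂ : Assign d X₂, h₂ (x₂.1 + v.1) * z (eX.symm (x₁, x₂))) ≠ 0 := fun hc =>
      hv (by rw [hc]; simp)
    obtain ⟨x₂, hx₂⟩ := exists_ne_zero_of_tsum_ne_zero' h0
    have hzz : z (eX.symm (x₁, x₂)) ≠ 0 := fun hc => hx₂ (by rw [hc, mul_zero])
    refine ⟨eX.symm (x₁, x₂), hzz, ?_⟩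
    show (eX (eX.symm (x₁, x₂))).1 = x₁
    rw [Equiv.apply_symm_apply]
  have hRfin : (Function.support fun x₁ : Assign d X₁ =>
      K₂ ^ 2 * ∑' x₂ : Assign d X₂, ‖z (eX.symm (x₁, x₂))‖ ^ 2).Finite := by
    apply hSx₁.subset
    intro x₁ hx₁
    rw [Function.mem_support] at hx₁
    have h2 : (∑' x₂ : Assign d X₂, ‖z (eX.symm (x₁, x₂))‖ ^ 2) ≠ 0 := fun hc =>
      hx₁ (by rw [hc, mul_zero])
    obtain ⟨x₂, hx₂⟩ := exists_ne_zero_of_tsum_ne_zero h2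
    have hzz : z (eX.symm (x₁, x₂)) ≠ 0 := fun hc => hx₂ (by rw [hc]; simp)
    refine ⟨eX.symm (x₁, x₂), hzz, ?_⟩
    show (eX (eX.symm (x₁, x₂))).1 = x₁
    rw [Equiv.apply_symm_apply]
  have hzsq : Summable fun p : Assign d X₁ × Assign d X₂ => ‖z (eX.symm p)‖ ^ 2 := by
    apply summable_of_finite_support
    apply (hz.image eX).subset
    intro p hp
    rw [Function.mem_support] at hp
    have : z (eX.symm p) ≠ 0 := fun h0 => hp (by rw [h0]; simp)
    exact ⟨eX.symm p, this, by simp⟩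
  have step6 : (∑' x₁ : Assign d X₁, ∑' v : Assign d (C ∪ Y₂),
      ‖∑' x₂ : Assign d X₂, h₂ (x₂.1 + v.1) * z (eX.symm (x₁, x₂))‖ ^ 2) ≤
      K₂ ^ 2 * ∑' x : Assign d X, ‖z x‖ ^ 2 := by
    calc (∑' x₁ : Assign d X₁, ∑' v : Assign d (C ∪ Y₂),
        ‖∑' x₂ : Assign d X₂, h₂ (x₂.1 + v.1) * z (eX.symm (x₁, x₂))‖ ^ 2)
        ≤ ∑' x₁ : Assign d X₁, K₂ ^ 2 * ∑' x₂ : Assign d X₂, ‖z (eX.symm (x₁, x₂))‖ ^ 2 :=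
          (summable_of_finite_support hLfin).tsum_le_tsum step5
            (summable_of_finite_support hRfin)
      _ = K₂ ^ 2 * ∑' x₁ : Assign d X₁, ∑' x₂ : Assign d X₂, ‖z (eX.symm (x₁, x₂))‖ ^ 2 :=
          tsum_mul_left
      _ = K₂ ^ 2 * ∑' p : Assign d X₁ × Assign d X₂, ‖z (eX.symm p)‖ ^ 2 := by
          rw [hzsq.tsum_prod' fun x₁ => hzsq.prod_factor x₁]
      _ = K₂ ^ 2 * ∑' x : Assign d X, ‖z x‖ ^ 2 := by
          rw [eX.symm.tsum_eq fun x : Assign d X => ‖z x‖ ^ 2]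
  -- summabilities for the final comparison
  have hfinA : (Function.support fun y₂ : Assign d Y₂ =>
      ∑' y₁ : Assign d Y₁, ‖∑' u : Assign d (X₁ ∪ C), h₁ (u.1 + y₁.1) * w u y₂‖ ^ 2).Finite := by
    apply (hwsupp.image Prod.snd).subset
    intro y₂ hy₂
    rw [Function.mem_support] at hy₂
    obtain ⟨y₁, hy₁⟩ := exists_ne_zero_of_tsum_ne_zero hy₂
    have h0 : (∑' u : Assign d (X₁ ∪ C), h₁ (u.1 + y₁.1) * w u y₂) ≠ 0 := fun hc =>
      hy₁ (by rw [hc]; simp)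
    obtain ⟨u, hu⟩ := exists_ne_zero_of_tsum_ne_zero' h0
    have hwne : w u y₂ ≠ 0 := fun hc => hu (by rw [hc, mul_zero])
    exact ⟨(u, y₂), hwne, rfl⟩
  have hfinB : (Function.support fun y₂ : Assign d Y₂ =>
      K₁ ^ 2 * ∑' u : Assign d (X₁ ∪ C), ‖w u y₂‖ ^ 2).Finite := by
    apply (hwsupp.image Prod.snd).subset
    intro y₂ hy₂
    rw [Function.mem_support] at hy₂
    have h2 : (∑' u : Assign d (X₁ ∪ C), ‖w u y₂‖ ^ 2) ≠ 0 := fun hc =>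
      hy₂ (by rw [hc, mul_zero])
    obtain ⟨u, hu⟩ := exists_ne_zero_of_tsum_ne_zero h2
    have hwne : w u y₂ ≠ 0 := fun hc => hu (by rw [hc]; simp)
    exact ⟨(u, y₂), hwne, rfl⟩
  -- final chain
  calc (∑' y : Assign d Y, ‖∑' x : Assign d X, H (x.1 + y.1) * z x‖ ^ 2)
      = ∑' y₂ : Assign d Y₂, ∑' y₁ : Assign d Y₁,
          ‖∑' u : Assign d (X₁ ∪ C), h₁ (u.1 + y₁.1) * w u y₂‖ ^ 2 := step2
    _ ≤ ∑' y₂ : Assign d Y₂, K₁ ^ 2 * ∑' u : Assign d (X₁ ∪ C), ‖w u y₂‖ ^ 2 :=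
        (summable_of_finite_support hfinA).tsum_le_tsum step3
          (summable_of_finite_support hfinB)
    _ = K₁ ^ 2 * ∑' y₂ : Assign d Y₂, ∑' u : Assign d (X₁ ∪ C), ‖w u y₂‖ ^ 2 := tsum_mul_left
    _ = K₁ ^ 2 * ∑' x₁ : Assign d X₁, ∑' v : Assign d (C ∪ Y₂),
          ‖∑' x₂ : Assign d X₂, h₂ (x₂.1 + v.1) * z (eX.symm (x₁, x₂))‖ ^ 2 := by rw [step4]
    _ ≤ K₁ ^ 2 * (K₂ ^ 2 * ∑' x : Assign d X, ‖z x‖ ^ 2) :=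
        mul_le_mul_of_nonneg_left step6 (by positivity)
    _ = (K₁ * K₂) ^ 2 * ∑' x : Assign d X, ‖z x‖ ^ 2 := by ring

end SemiAux

namespace SemiAux

variable {ι : Type*} [DecidableEq ι] {d : ℕ}

lemma isOpBound_tensorNorm {B C : Finset ι} (h : (ι → Vec d) → ℂ)
    (hne : ∃ K, IsOpBound h B C K) : IsOpBound h B C (tensorNorm h B C) := by
  have hbdd : BddBelow {K : ℝ | IsOpBound h B C K} := ⟨0, fun K hK => hK.1⟩
  have hclosed : IsClosed {K : ℝ | IsOpBound h B C K} := by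
    have heq : {K : ℝ | IsOpBound h B C K} = Set.Ici 0 ∩
        ⋂ zp : {zf : Assign d B → ℂ // (Function.support zf).Finite},
          {K : ℝ | (∑' c : Assign d C, ‖∑' b : Assign d B, h (b.1 + c.1) * zp.1 b‖ ^ 2) ≤
            K ^ 2 * ∑' b : Assign d B, ‖zp.1 b‖ ^ 2} := by
      ext K
      simp only [Set.mem_setOf_eq, Set.mem_inter_iff, Set.mem_Ici, Set.mem_iInter,
        IsOpBound, Subtype.forall]
    rw [heq]
    exact isClosed_Ici.inter (isClosed_iInter fun zp =>
      isClosed_le continuous_const ((continuous_pow 2).mul continuous_const))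
  exact hclosed.csInf_mem hne hbdd

end SemiAux


/-- Proposition 2.5 (Proposition 4.11 of [19]): the semi-product
`H_{k_A} = ∑_{k_C} h¹_{k_{A₁}} h²_{k_{A₂}}` (with `C = A₁ ∩ A₂`, `A = A₁ Δ A₂`) satisfies
`‖H‖_{k_X → k_Y} ≤ ‖h¹‖_{k_{X₁∪C} → k_{Y₁}} ‖h²‖_{k_{X₂} → k_{C∪Y₂}}` for any partition
`(X, Y)` of `A`. -/
theorem semiproduct_bound {ι : Type*} [DecidableEq ι] {d : ℕ} (hd : 1 ≤ d)
    (A₁ A₂ : Finset ι) (h₁ h₂ : (ι → Vec d) → ℂ)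
    (h₁dep : TensorDependsOn h₁ A₁) (h₂dep : TensorDependsOn h₂ A₂)
    (h₁fin : TensorFinSupp h₁ A₁) (h₂fin : TensorFinSupp h₂ A₂)
    (H : (ι → Vec d) → ℂ)
    (hH : ∀ k : ι → Vec d,
      H k = ∑' c : Assign d (A₁ ∩ A₂),
        h₁ (proj ((A₁ ∪ A₂) \ (A₁ ∩ A₂)) k + c.1) * h₂ (proj ((A₁ ∪ A₂) \ (A₁ ∩ A₂)) k + c.1))
    (X Y : Finset ι) (hdisj : Disjoint X Y) (hpart : X ∪ Y = (A₁ ∪ A₂) \ (A₁ ∩ A₂)) :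
    tensorNorm H X Y ≤
      tensorNorm h₁ ((X ∩ A₁) ∪ (A₁ ∩ A₂)) (Y ∩ A₁) *
      tensorNorm h₂ (X ∩ A₂) ((A₁ ∩ A₂) ∪ (Y ∩ A₂)) := by
  classical
  have hmemiff : ∀ i, (i ∈ X ∨ i ∈ Y) ↔ ((i ∈ A₁ ∨ i ∈ A₂) ∧ ¬(i ∈ A₁ ∧ i ∈ A₂)) := by
    intro i
    have := Finset.ext_iff.1 hpart i
    simpa only [Finset.mem_union, Finset.mem_sdiff, Finset.mem_inter] using this
  have hXY : ∀ i, i ∈ X → i ∈ Y → False := fun i hi hj => Finset.disjoint_left.1 hdisj hi hj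
  have hXnC : ∀ i ∈ X, ¬(i ∈ A₁ ∧ i ∈ A₂) := fun i hi => ((hmemiff i).1 (Or.inl hi)).2
  have hYnC : ∀ i ∈ Y, ¬(i ∈ A₁ ∧ i ∈ A₂) := fun i hi => ((hmemiff i).1 (Or.inr hi)).2
  have hdisj₁ : Disjoint ((X ∩ A₁) ∪ (A₁ ∩ A₂)) (Y ∩ A₁) := by
    rw [Finset.disjoint_union_left]
    constructor
    · rw [Finset.disjoint_left]; intro i hi hj
      rw [Finset.mem_inter] at hi hj
      exact hXY i hi.1 hj.1
    · rw [Finset.disjoint_left]; intro i hi hj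
      rw [Finset.mem_inter] at hi hj
      exact hYnC i hj.1 hi
  have hu₁ : ((X ∩ A₁) ∪ (A₁ ∩ A₂)) ∪ (Y ∩ A₁) = A₁ := by
    ext i
    simp only [Finset.mem_union, Finset.mem_inter]
    constructor
    · tauto
    · intro hi
      by_cases h2 : i ∈ A₂
      · tauto
      · have := (hmemiff i).2 ⟨Or.inl hi, fun h => h2 h.2⟩
        tauto
  have hdisj₂ : Disjoint (X ∩ A₂) ((A₁ ∩ A₂) ∪ (Y ∩ A₂)) := by
    rw [Finset.disjoint_union_right]
    constructor
    · rw [Finset.disjoint_left]; intro i hi hj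
      rw [Finset.mem_inter] at hi hj
      exact hXnC i hi.1 hj
    · rw [Finset.disjoint_left]; intro i hi hj
      rw [Finset.mem_inter] at hi hj
      exact hXY i hi.1 hj.1
  have hu₂ : (X ∩ A₂) ∪ ((A₁ ∩ A₂) ∪ (Y ∩ A₂)) = A₂ := by
    ext i
    simp only [Finset.mem_union, Finset.mem_inter]
    constructor
    · tauto
    · intro hi
      by_cases h1 : i ∈ A₁
      · tauto
      · have := (hmemiff i).2 ⟨Or.inr hi, fun h => h1 h.1⟩
        tauto
  have hne₁ := SemiAux.exists_opBound h₁ h₁fin hdisj₁ hu₁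
  have hne₂ := SemiAux.exists_opBound h₂ h₂fin hdisj₂ hu₂
  have hK₁ := SemiAux.isOpBound_tensorNorm h₁ hne₁
  have hK₂ := SemiAux.isOpBound_tensorNorm h₂ hne₂
  have hHbound := SemiAux.key A₁ A₂ h₁ h₂ h₁dep h₂dep h₁fin h₂fin H hH X Y hdisj hpart hK₁ hK₂
  exact csInf_le ⟨0, fun K hK => hK.1⟩ hHbound
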